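/- Let G be a connected graph with chromatic number χ(G) ≥ 2 and let G' = G + K_1 be the join of G with a single new vertex w. Then χ(G') = χ(G) + 1, the vertex w yields a rainbow neighbourhood in every chromatic colouring of G', and for every chromatic colouring c of G (extended to G' by giving w the new colour), a set F ⊆ V(G) is a fade set of G with respect to c if and only if F is a fade set of G' with respect to the extended colouring. Consequently f(G') = f(G). -/

import Mathlib

def closedNbr {V : Type*} [Fintype V] [DecidableEq V] (G : SimpleGraph V)
    [DecidableRel G.Adj] (u : V) : Finset V :=
  insert u (G.neighborFinset u)

def YieldsRainbow {V : Type*} [Fintype V] [DecidableEq V] (G : SimpleGraph V)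
    [DecidableRel G.Adj] {k : ℕ} (c : V → Fin k) (u : V) : Prop :=
  ∀ i : Fin k, ∃ v ∈ closedNbr G u, c v = i

def IsFadeSet {V : Type*} [Fintype V] [DecidableEq V] (G : SimpleGraph V)
    [DecidableRel G.Adj] {k : ℕ} (c : V → Fin k) (F : Finset V) : Prop :=
  ∀ u : V, YieldsRainbow G c u →
    ∀ i : Fin k, ∃ v ∈ closedNbr G u, c v = i ∧ v ∉ F

noncomputable def fadingNumber {V : Type*} [Fintype V] [DecidableEq V]
    (G : SimpleGraph V) [DecidableRel G.Adj] {k : ℕ} (c : V → Fin k) : ℕ :=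
  sSup {m | ∃ F : Finset V, IsFadeSet G c F ∧ F.card = m}

/-- The join `G + K₁`, where `none` is the new apex vertex. -/
def joinK1 {V : Type*} (G : SimpleGraph V) : SimpleGraph (Option V) where
  Adj u v :=
    match u, v with
    | some a, some b => G.Adj a b
    | some _, none => True
    | none, some _ => True
    | none, none => False
  symm := by
    constructor
    intro u v h
    match u, v with
    | some a, some b => exact G.adj_symm h
    | some _, none => trivial
    | none, some _ => trivial
  loopless := by
    constructor
    intro u h
    match u with
    | some a => exact G.irrefl h
    | none => exact h

instance joinK1.decAdj {V : Type*} (G : SimpleGraph V) [DecidableRel G.Adj] :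
    DecidableRel (joinK1 G).Adj
  | some a, some b => inferInstanceAs (Decidable (G.Adj a b))
  | some _, none => inferInstanceAs (Decidable True)
  | none, some _ => inferInstanceAs (Decidable True)
  | none, none => inferInstanceAs (Decidable False)

/-- Extend a colouring of `G` to `G + K₁`, giving the apex the new colour. -/
def extColour {V : Type*} {k : ℕ} (c : V → Fin k) : Option V → Fin (k + 1) :=
  fun u => u.elim (Fin.last k) (fun v => (c v).castSucc)

section Aux

variable {V : Type*} [Fintype V] [DecidableEq V]

lemma mem_closedNbr {G : SimpleGraph V} [DecidableRel G.Adj] {u v : V} :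
    v ∈ closedNbr G u ↔ v = u ∨ G.Adj u v := by
  simp [closedNbr]

/-- A proper colouring missing a colour yields colourability with one fewer colour. -/
lemma colorable_of_missing {W : Type*} (H : SimpleGraph W) {m : ℕ}
    (d : W → Fin m) (hd : ∀ u v : W, H.Adj u v → d u ≠ d v) (i : Fin m)
    (hmiss : ∀ w, d w ≠ i) : H.Colorable (m - 1) := by
  have C : H.Coloring {j : Fin m // j ≠ i} :=
    SimpleGraph.Coloring.mk (fun w => ⟨d w, hmiss w⟩)
      (fun h => by simpa [Subtype.ext_iff] using hd _ _ h)
  have := C.colorable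
  rwa [Fintype.card_subtype_compl, Fintype.card_fin, Fintype.card_subtype_eq] at this

lemma chromatic_surjective {G : SimpleGraph V} [DecidableRel G.Adj] {k : ℕ}
    (hk : 1 ≤ k) (c : V → Fin k) (hproper : ∀ u v : V, G.Adj u v → c u ≠ c v)
    (hchrom : G.chromaticNumber = k) : Function.Surjective c := by
  intro i
  by_contra h
  push_neg at h
  have hcol := colorable_of_missing G c hproper i (fun w hw => h w hw)
  have hle := hcol.chromaticNumber_le
  rw [hchrom] at hle
  have : (k : ℕ∞) ≤ (k - 1 : ℕ) := hle
  have h2 : k ≤ k - 1 := by exact_mod_cast this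
  omega

/-- Every colour class of a chromatic colouring contains a vertex yielding a
rainbow neighbourhood. -/
lemma exists_rainbow {G : SimpleGraph V} [DecidableRel G.Adj] {k : ℕ}
    (hk : 1 ≤ k) (c : V → Fin k) (hproper : ∀ u v : V, G.Adj u v → c u ≠ c v)
    (hchrom : G.chromaticNumber = k) (j : Fin k) :
    ∃ u : V, c u = j ∧ YieldsRainbow G c u := by
  by_contra h
  push_neg at h
  -- every vertex of colour j misses some colour in its closed neighbourhood
  have hmiss : ∀ u : V, c u = j → ∃ i : Fin k, ∀ v ∈ closedNbr G u, c v ≠ i := by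
    intro u hu
    have := h u hu
    unfold YieldsRainbow at this
    push_neg at this
    obtain ⟨i, hi⟩ := this
    exact ⟨i, fun v hv => hi v hv⟩
  classical
  -- recolour the colour-j vertices
  set c' : V → Fin k := fun u =>
    if hu : c u = j then Classical.choose (hmiss u hu) else c u with hc'
  have hc'spec : ∀ u (hu : c u = j), ∀ v ∈ closedNbr G u,
      c v ≠ Classical.choose (hmiss u hu) := fun u hu => Classical.choose_spec (hmiss u hu)
  have hne : ∀ u, c' u ≠ j := by
    intro u
    by_cases hu : c u = j
    · simp only [hc', hu, dif_pos]
      intro hcontra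
      exact hc'spec u hu u (by simp [mem_closedNbr]) (by rw [hu, hcontra])
    · simpa [hc', hu] using hu
  have hproper' : ∀ u v : V, G.Adj u v → c' u ≠ c' v := by
    intro u v huv
    by_cases hu : c u = j <;> by_cases hv : c v = j
    · exact absurd (hu.trans hv.symm) (hproper u v huv)
    · simp only [hc', hu, hv, dif_pos, dif_neg, not_false_iff]
      intro hcontra
      exact hc'spec u hu v (mem_closedNbr.mpr (Or.inr huv)) hcontra.symm
    · simp only [hc', hu, hv, dif_pos, dif_neg, not_false_iff]
      intro hcontra
      exact hc'spec v hv u (mem_closedNbr.mpr (Or.inr huv.symm)) hcontra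
    · simpa [hc', hu, hv] using hproper u v huv
  have hcol := colorable_of_missing G c' hproper' j hne
  have hle := hcol.chromaticNumber_le
  rw [hchrom] at hle
  have h2 : k ≤ k - 1 := by exact_mod_cast hle
  omega

lemma mem_closedNbr_none {G : SimpleGraph V} [DecidableRel G.Adj] (v : Option V) :
    v ∈ closedNbr (joinK1 G) none := by
  cases v with
  | none => simp [closedNbr]
  | some a =>
      apply mem_closedNbr.mpr
      exact Or.inr (by trivial)

lemma none_mem_closedNbr_some {G : SimpleGraph V} [DecidableRel G.Adj] (u : V) :
    (none : Option V) ∈ closedNbr (joinK1 G) (some u) :=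
  mem_closedNbr.mpr (Or.inr (by trivial))

lemma some_mem_closedNbr_some {G : SimpleGraph V} [DecidableRel G.Adj] {u w : V} :
    (some w : Option V) ∈ closedNbr (joinK1 G) (some u) ↔ w ∈ closedNbr G u := by
  simp only [mem_closedNbr]
  constructor
  · rintro (h | h)
    · exact Or.inl (by injection h)
    · exact Or.inr h
  · rintro (h | h)
    · exact Or.inl (by rw [h])
    · exact Or.inr h

lemma extColour_some {k : ℕ} (c : V → Fin k) (v : V) :
    extColour c (some v) = (c v).castSucc := rfl

lemma extColour_none {k : ℕ} (c : V → Fin k) :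
    extColour c (none : Option V) = Fin.last k := rfl

lemma extColour_eq_castSucc {k : ℕ} {c : V → Fin k} {v : Option V} {i : Fin k}
    (h : extColour c v = i.castSucc) : ∃ w, v = some w ∧ c w = i := by
  cases v with
  | none =>
      exact absurd h.symm (Fin.ne_of_lt (Fin.castSucc_lt_last i))
  | some w =>
      exact ⟨w, rfl, Fin.castSucc_injective _ h⟩

lemma yr_some {G : SimpleGraph V} [DecidableRel G.Adj] {k : ℕ} {c : V → Fin k} {u : V} :
    YieldsRainbow (joinK1 G) (extColour c) (some u) ↔ YieldsRainbow G c u := by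
  constructor
  · intro h i
    obtain ⟨v, hv, hcv⟩ := h i.castSucc
    obtain ⟨w, rfl, hw⟩ := extColour_eq_castSucc hcv
    exact ⟨w, some_mem_closedNbr_some.mp hv, hw⟩
  · intro h i
    rcases Fin.eq_castSucc_or_eq_last i with ⟨j, rfl⟩ | rfl
    · obtain ⟨w, hw, hcw⟩ := h j
      exact ⟨some w, some_mem_closedNbr_some.mpr hw, by rw [extColour_some, hcw]⟩
    · exact ⟨none, none_mem_closedNbr_some u, rfl⟩

end Aux

theorem stmt_8 {V : Type*} [Fintype V] [DecidableEq V] (G : SimpleGraph V)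
    [DecidableRel G.Adj] (hconn : G.Connected) {k : ℕ} (hk : 2 ≤ k)
    (c : V → Fin k) (hproper : ∀ u v : V, G.Adj u v → c u ≠ c v)
    (hchrom : G.chromaticNumber = k) :
    (joinK1 G).chromaticNumber = (k + 1 : ℕ) ∧
    (∀ d : Option V → Fin (k + 1),
      (∀ u v : Option V, (joinK1 G).Adj u v → d u ≠ d v) →
        YieldsRainbow (joinK1 G) d none) ∧
    (∀ F : Finset V,
      IsFadeSet G c F ↔
        IsFadeSet (joinK1 G) (extColour c) (F.map Function.Embedding.some)) ∧
    fadingNumber (joinK1 G) (extColour c) = fadingNumber G c := by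
  classical
  have hk1 : 1 ≤ k := le_trans (by norm_num) hk
  -- extColour is a proper colouring of the join
  have hext : ∀ u v : Option V, (joinK1 G).Adj u v → extColour c u ≠ extColour c v := by
    intro u v h
    match u, v with
    | some a, some b =>
        exact fun he => hproper a b h (Fin.castSucc_injective _ he)
    | some a, none => exact Fin.ne_of_lt (Fin.castSucc_lt_last _)
    | none, some b => exact (Fin.castSucc_lt_last _).ne'
    | none, none => exact absurd h (by simp [joinK1])
  have hcol1 : (joinK1 G).Colorable (k + 1) :=
    ⟨SimpleGraph.Coloring.mk (extColour c) (fun h => hext _ _ h)⟩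
  -- the join is not k-colourable
  have hnotcol : ¬ (joinK1 G).Colorable k := by
    rintro ⟨C⟩
    have hCproper : ∀ u v : Option V, (joinK1 G).Adj u v → C u ≠ C v :=
      fun u v h => C.valid h
    have hc0 : ∀ u v : V, G.Adj u v → C (some u) ≠ C (some v) :=
      fun u v h => hCproper (some u) (some v) h
    have hmiss : ∀ v : V, C (some v) ≠ C none :=
      fun v => hCproper (some v) none (by trivial)
    have hcol := colorable_of_missing G (fun v => C (some v)) hc0 (C none) hmiss
    have hle := hcol.chromaticNumber_le
    rw [hchrom] at hle
    have h2 : k ≤ k - 1 := by exact_mod_cast hle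
    omega
  have hchrom' : (joinK1 G).chromaticNumber = (k + 1 : ℕ) := by
    refine le_antisymm hcol1.chromaticNumber_le ?_
    have hlt : (k : ℕ∞) < (joinK1 G).chromaticNumber := by
      by_contra h
      push_neg at h
      exact hnotcol (SimpleGraph.chromaticNumber_le_iff_colorable.mp h)
    have := Order.add_one_le_of_lt hlt
    simpa [Nat.cast_add] using this
  -- part 2: apex yields a rainbow neighbourhood in any chromatic colouring
  have part2 : ∀ d : Option V → Fin (k + 1),
      (∀ u v : Option V, (joinK1 G).Adj u v → d u ≠ d v) →
        YieldsRainbow (joinK1 G) d none := by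
    intro d hd i
    by_contra h
    push_neg at h
    have hmiss : ∀ v : Option V, d v ≠ i := fun v => h v (mem_closedNbr_none v)
    have hcol := colorable_of_missing (joinK1 G) d hd i hmiss
    rw [Nat.add_sub_cancel] at hcol
    exact hnotcol hcol
  -- part 3: fade set correspondence
  have part3 : ∀ F : Finset V,
      IsFadeSet G c F ↔
        IsFadeSet (joinK1 G) (extColour c) (F.map Function.Embedding.some) := by
    intro F
    constructor
    · intro hF u hu i
      cases u with
      | none =>
          rcases Fin.eq_castSucc_or_eq_last i with ⟨j, rfl⟩ | rfl
          · obtain ⟨w, hcw, hyr⟩ := exists_rainbow hk1 c hproper hchrom j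
            obtain ⟨v, hv, hcv, hvF⟩ := hF w hyr j
            refine ⟨some v, mem_closedNbr_none _, by rw [extColour_some, hcv], ?_⟩
            simpa using hvF
          · exact ⟨none, mem_closedNbr_none _, rfl, by simp⟩
      | some a =>
          have hu' := yr_some.mp hu
          rcases Fin.eq_castSucc_or_eq_last i with ⟨j, rfl⟩ | rfl
          · obtain ⟨v, hv, hcv, hvF⟩ := hF a hu' j
            refine ⟨some v, some_mem_closedNbr_some.mpr hv,
              by rw [extColour_some, hcv], ?_⟩
            simpa using hvF
          · exact ⟨none, none_mem_closedNbr_some a, rfl, by simp⟩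
    · intro hF' u hu i
      obtain ⟨v, hv, hcv, hvF⟩ := hF' (some u) (yr_some.mpr hu) i.castSucc
      obtain ⟨w, rfl, hw⟩ := extColour_eq_castSucc hcv
      exact ⟨w, some_mem_closedNbr_some.mp hv, hw,
        fun h => hvF (Finset.mem_map_of_mem _ h)⟩
  refine ⟨hchrom', part2, part3, ?_⟩
  -- part 4: equality of fading numbers
  have hset : {m | ∃ F' : Finset (Option V),
        IsFadeSet (joinK1 G) (extColour c) F' ∧ F'.card = m} =
      {m | ∃ F : Finset V, IsFadeSet G c F ∧ F.card = m} := by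
    ext m
    constructor
    · rintro ⟨F', hF', rfl⟩
      -- none yields a rainbow neighbourhood wrt extColour
      have hyr : YieldsRainbow (joinK1 G) (extColour c) none := by
        intro i
        rcases Fin.eq_castSucc_or_eq_last i with ⟨j, rfl⟩ | rfl
        · obtain ⟨w, hw⟩ := chromatic_surjective hk1 c hproper hchrom j
          exact ⟨some w, mem_closedNbr_none _, by rw [extColour_some, hw]⟩
        · exact ⟨none, mem_closedNbr_none _, rfl⟩
      have hnone : (none : Option V) ∉ F' := by
        obtain ⟨v, _, hcv, hvF⟩ := hF' none hyr (Fin.last k)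
        cases v with
        | none => exact hvF
        | some w => exact absurd hcv (Fin.ne_of_lt (Fin.castSucc_lt_last _))
      set F : Finset V := F'.preimage some (fun a _ b _ h => Option.some_injective V h)
        with hFdef
      have hmap : F.map Function.Embedding.some = F' := by
        ext x
        cases x with
        | none => simp [hnone]
        | some a => simp [hFdef, Finset.mem_preimage]; exact Finset.mem_preimage
      refine ⟨F, (part3 F).mpr (by rwa [hmap]), ?_⟩
      rw [← hmap, Finset.card_map]
    · rintro ⟨F, hF, rfl⟩
      exact ⟨F.map Function.Embedding.some, (part3 F).mp hF, Finset.card_map _⟩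
  simp only [fadingNumber, hset]
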